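/- For all r, s ∈ ℕ there exists l = l(r,s) ∈ ℕ such that whenever A is an IP*_r set in 𝒫_f(ℕ) and B is an IP*_s set in 𝒫_f(ℕ), the intersection A ∩ B is an IP*_l set in 𝒫_f(ℕ). -/
import Mathlib


open Finset

/-- The word `a 0 * f (t 0) * a 1 * f (t 1) * ⋯ * a (m-1) * f (t (m-1)) * a m`. -/
def crWord {S : Type*} [Semigroup S] (m : ℕ) (a : Fin (m + 1) → S) (t : Fin m → ℕ)
    (f : ℕ → S) : S :=
  (List.finRange m).foldl (fun x i => x * f (t i) * a i.succ) (a 0)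

/-- `A` is a combinatorially rich (CR) set in the semigroup `S`. -/
def IsCRSet {S : Type*} [Semigroup S] (A : Set S) : Prop :=
  ∀ k : ℕ, ∃ r : ℕ, ∀ F : Finset (ℕ → S), F.Nonempty → F.card ≤ k →
    ∃ m : ℕ, 0 < m ∧ ∃ a : Fin (m + 1) → S, ∃ t : Fin m → ℕ,
      StrictMono t ∧ (∀ i, t i ≤ r) ∧ ∀ f ∈ F, crWord m a t f ∈ A

/-- An increasing block sequence of nonempty finite subsets of ℕ:
each block is nonempty and every element of an earlier block is less
than every element of a later block (equivalently `max H_n < min H_{n+1}`). -/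
def BlockSeq {r : ℕ} (H : Fin r → Finset ℕ) : Prop :=
  (∀ n, (H n).Nonempty) ∧ ∀ i j : Fin r, i < j → ∀ x ∈ H i, ∀ y ∈ H j, x < y

/-- Finite unions of a finite block sequence. -/
def FU {r : ℕ} (H : Fin r → Finset ℕ) : Set (Finset ℕ) :=
  {L | ∃ K : Finset (Fin r), K.Nonempty ∧ L = K.biUnion H}

def IsIPr (r : ℕ) (B : Set (Finset ℕ)) : Prop :=
  ∃ H : Fin r → Finset ℕ, BlockSeq H ∧ B = FU H

def IsIPrStar (r : ℕ) (A : Set (Finset ℕ)) : Prop :=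
  ∀ B : Set (Finset ℕ), IsIPr r B → (A ∩ B).Nonempty

def BlockSeqInf (H : ℕ → Finset ℕ) : Prop :=
  (∀ n, (H n).Nonempty) ∧ ∀ i j : ℕ, i < j → ∀ x ∈ H i, ∀ y ∈ H j, x < y

def IsIP (B : Set (Finset ℕ)) : Prop :=
  ∃ H : ℕ → Finset ℕ, BlockSeqInf H ∧
    B = {L | ∃ K : Finset ℕ, K.Nonempty ∧ L = K.biUnion H}

def IsIPStar (A : Set (Finset ℕ)) : Prop :=
  ∀ B : Set (Finset ℕ), IsIP B → (A ∩ B).Nonempty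

/-- `Θ(A,F)`: the nonempty finite sets `L = {t(1) < … < t(m)}` for which there is
`a ∈ S^{m+1}` with `a(1)·f(t(1))·a(2)⋯a(m)·f(t(m))·a(m+1) ∈ A` for all `f ∈ F`. -/
def Theta {S : Type*} [Semigroup S] (A : Set S) (F : Finset (ℕ → S)) : Set (Finset ℕ) :=
  {L | L.Nonempty ∧ ∃ a : Fin (L.card + 1) → S,
    ∀ f ∈ F, crWord L.card a (fun i => ((L.orderIsoOfFin rfl) i : ℕ)) f ∈ A}

def fsUnionSemigroup : Semigroup (Finset ℕ) where
  mul := (· ∪ ·)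
  mul_assoc := Finset.union_assoc

attribute [local instance] fsUnionSemigroup Ultrafilter.mul Ultrafilter.semigroup

lemma fs_mul_def (a b : Finset ℕ) : a * b = a ∪ b := rfl

/-- Sets whose elements are all ≥ n, nonempty. -/
def En (n : ℕ) : Set (Finset ℕ) := {K | K.Nonempty ∧ ∀ x ∈ K, n ≤ x}

lemma exists_goodU : ∃ U : Ultrafilter (Finset ℕ), U * U = U ∧ ∀ n, En n ∈ U := by
  have h1 : (⋂ n, {V : Ultrafilter (Finset ℕ) | En n ∈ V}).Nonempty := by
    refine ⟨(Filter.hyperfilter ℕ).map (fun n => ({n} : Finset ℕ)),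
      Set.mem_iInter.mpr fun n => ?_⟩
    show (fun m => ({m} : Finset ℕ)) ⁻¹' (En n) ∈ Filter.hyperfilter ℕ
    apply Filter.mem_hyperfilter_of_finite_compl
    have : ((fun m => ({m} : Finset ℕ)) ⁻¹' (En n))ᶜ ⊆ Set.Iio n := by
      intro m hm
      simp only [Set.mem_compl_iff, Set.mem_preimage, En, Set.mem_setOf_eq] at hm
      by_contra h
      replace h : n ≤ m := by simpa [Set.mem_Iio] using h
      exact hm ⟨⟨m, mem_singleton_self m⟩, fun x hx =>
        (Finset.mem_singleton.mp hx) ▸ h⟩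
    exact (Set.finite_Iio n).subset this
  have h2 : IsCompact (⋂ n, {V : Ultrafilter (Finset ℕ) | En n ∈ V}) :=
    (isClosed_iInter fun n => ultrafilter_isClosed_basic (En n)).isCompact
  have h3 : ∀ x ∈ (⋂ n, {V : Ultrafilter (Finset ℕ) | En n ∈ V}),
      ∀ y ∈ (⋂ n, {V : Ultrafilter (Finset ℕ) | En n ∈ V}),
      x * y ∈ (⋂ n, {V : Ultrafilter (Finset ℕ) | En n ∈ V}) := by
    intro x hx y hy
    rw [Set.mem_iInter] at *
    intro n
    have hx' := hx n
    have hy' := hy n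
    show En n ∈ x * y
    refine (Ultrafilter.eventually_mul x y (· ∈ En n)).mpr ?_
    filter_upwards [hx'] with m hm
    filter_upwards [hy'] with m' hm'
    rw [fs_mul_def]
    exact ⟨hm.1.mono Finset.subset_union_left, fun z hz => by
      rcases Finset.mem_union.mp hz with h | h
      exacts [hm.2 z h, hm'.2 z h]⟩
  obtain ⟨U, hUmem, hidem⟩ := exists_idempotent_in_compact_subsemigroup
    (Ultrafilter.continuous_mul_left) _ h1 h2 h3
  exact ⟨U, hidem, fun n => Set.mem_iInter.mp hUmem n⟩

/-- The "star" of a set with respect to an ultrafilter. -/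
def stU (U : Ultrafilter (Finset ℕ)) (X : Set (Finset ℕ)) : Set (Finset ℕ) :=
  {m | m ∈ X ∧ {p | m ∪ p ∈ X} ∈ U}

lemma stU_subset (U : Ultrafilter (Finset ℕ)) (X : Set (Finset ℕ)) : stU U X ⊆ X :=
  fun _ hm => hm.1

lemma stU_mem {U : Ultrafilter (Finset ℕ)} (hidem : U * U = U) {X : Set (Finset ℕ)}
    (hX : X ∈ U) : stU U X ∈ U := by
  have h2 : {m | {p | m ∪ p ∈ X} ∈ U} ∈ U := by
    have hXU : X ∈ U * U := by rw [hidem]; exact hX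
    have := (Ultrafilter.eventually_mul U U (· ∈ X)).mp hXU
    exact this
  exact Filter.inter_mem hX h2

open scoped Classical in
noncomputable def pickSet (U : Ultrafilter (Finset ℕ)) (X : Set (Finset ℕ)) (b : ℕ) :
    Finset ℕ :=
  if hS : (stU U X ∩ En b).Nonempty then hS.some else ∅

/-- The recursive sequence of (large set, lower bound) pairs. -/
noncomputable def seqF (U : Ultrafilter (Finset ℕ)) (c : Set (Finset ℕ)) :
    ℕ → Set (Finset ℕ) × ℕ
  | 0 => (c, 0)
  | (n+1) =>
    let X := (seqF U c n).1
    let b := (seqF U c n).2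
    let h := pickSet U X b
    (X ∩ {m | h ∪ m ∈ X}, (h.sup id) + 1)

noncomputable def HSeq (U : Ultrafilter (Finset ℕ)) (c : Set (Finset ℕ)) (n : ℕ) : Finset ℕ :=
  pickSet U (seqF U c n).1 (seqF U c n).2

lemma seqF_succ (U : Ultrafilter (Finset ℕ)) (c : Set (Finset ℕ)) (n : ℕ) :
    seqF U c (n+1) = ((seqF U c n).1 ∩ {m | HSeq U c n ∪ m ∈ (seqF U c n).1},
      ((HSeq U c n).sup id) + 1) := rfl

section Extraction

variable {U : Ultrafilter (Finset ℕ)} (hidem : U * U = U) (hE : ∀ n, En n ∈ U)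
  {c : Set (Finset ℕ)} (hc : c ∈ U)

include hidem hE hc

lemma pick_spec (n : ℕ) (hX : (seqF U c n).1 ∈ U) :
    HSeq U c n ∈ stU U (seqF U c n).1 ∩ En (seqF U c n).2 := by
  have hS : stU U (seqF U c n).1 ∩ En (seqF U c n).2 ∈ U :=
    Filter.inter_mem (stU_mem hidem hX) (hE _)
  have hne : (stU U (seqF U c n).1 ∩ En (seqF U c n).2).Nonempty :=
    Ultrafilter.nonempty_of_mem hS
  rw [HSeq, pickSet, dif_pos hne]
  exact hne.some_mem

lemma seqF_mem : ∀ n, (seqF U c n).1 ∈ U := by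
  intro n
  induction n with
  | zero => exact hc
  | succ n ih =>
    have hp := pick_spec hidem hE hc n ih
    rw [seqF_succ]
    exact Filter.inter_mem ih hp.1.2

lemma HSeq_mem (n : ℕ) : HSeq U c n ∈ stU U (seqF U c n).1 ∩ En (seqF U c n).2 :=
  pick_spec hidem hE hc n (seqF_mem hidem hE hc n)

lemma seqF_anti : ∀ {m n : ℕ}, m ≤ n → (seqF U c n).1 ⊆ (seqF U c m).1 := by
  intro m n h
  induction n with
  | zero => rw [Nat.le_zero.mp h]
  | succ n ih =>
    rcases Nat.lt_or_ge m (n+1) with h' | h'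
    · exact (Set.inter_subset_left).trans (ih (Nat.lt_succ_iff.mp h'))
    · rw [Nat.le_antisymm h h']
lemma seqF_bound_mono : ∀ {m n : ℕ}, m ≤ n → (seqF U c m).2 ≤ (seqF U c n).2 := by
  have step : ∀ n, (seqF U c n).2 ≤ (seqF U c (n+1)).2 := by
    intro n
    have hp := HSeq_mem hidem hE hc n
    obtain ⟨x, hx⟩ := hp.2.1
    have h1 : (seqF U c n).2 ≤ x := hp.2.2 x hx
    have h2 : x ≤ (HSeq U c n).sup id := Finset.le_sup (f := id) hx
    rw [seqF_succ]
    omega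
  intro m n h
  induction n with
  | zero => rw [Nat.le_zero.mp h]
  | succ n ih =>
    rcases Nat.lt_or_ge m (n+1) with h' | h'
    · exact (ih (Nat.lt_succ_iff.mp h')).trans (step n)
    · rw [Nat.le_antisymm h h']

lemma HSeq_blockInf : BlockSeqInf (HSeq U c) := by
  constructor
  · exact fun n => (HSeq_mem hidem hE hc n).2.1
  · intro i j hij x hx y hy
    have h1 : x ≤ (HSeq U c i).sup id := Finset.le_sup (f := id) hx
    have h2 : (seqF U c (i+1)).2 ≤ (seqF U c j).2 := seqF_bound_mono hidem hE hc hij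
    have h3 : (seqF U c j).2 ≤ y := (HSeq_mem hidem hE hc j).2.2 y hy
    rw [seqF_succ] at h2
    omega

lemma HSeq_union (K : Finset ℕ) (hK : K.Nonempty) :
    K.biUnion (HSeq U c) ∈ (seqF U c (K.min' hK)).1 := by
  induction K using Finset.strongInductionOn with
  | _ K ih =>
  set j := K.min' hK with hj
  have hjK : j ∈ K := K.min'_mem hK
  rcases (K.erase j).eq_empty_or_nonempty with he | hne
  · have hKj : K = {j} := by
      apply Finset.eq_singleton_iff_unique_mem.mpr
      exact ⟨hjK, fun x hx => by
        by_contra hxj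
        exact (Finset.notMem_empty x) (he ▸ Finset.mem_erase.mpr ⟨hxj, hx⟩)⟩
    rw [hKj, Finset.singleton_biUnion]
    exact ((HSeq_mem hidem hE hc j).1).1
  · have hsub : K.erase j ⊂ K := Finset.erase_ssubset hjK
    have ihe := ih (K.erase j) hsub hne
    set j' := (K.erase j).min' hne with hj'
    have hjj' : j + 1 ≤ j' := by
      have h1 : j' ∈ K.erase j := Finset.min'_mem _ _
      have h2 : j' ≠ j := (Finset.mem_erase.mp h1).1
      have h3 : j ≤ j' := K.min'_le _ (Finset.mem_erase.mp h1).2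
      omega
    have hmem : (K.erase j).biUnion (HSeq U c) ∈ (seqF U c (j+1)).1 :=
      seqF_anti hidem hE hc hjj' ihe
    rw [seqF_succ] at hmem
    have hKi : K = insert j (K.erase j) := (Finset.insert_erase hjK).symm
    rw [hKi, Finset.biUnion_insert]
    exact hmem.2

lemma exists_blockseq_in (k : ℕ) :
    ∃ H : Fin k → Finset ℕ, BlockSeq H ∧
      ∀ K : Finset (Fin k), K.Nonempty → K.biUnion H ∈ c := by
  refine ⟨fun i => HSeq U c i.val, ?_, ?_⟩
  · obtain ⟨h1, h2⟩ := HSeq_blockInf hidem hE hc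
    exact ⟨fun n => h1 n, fun i j hij x hx y hy => h2 i j hij x hx y hy⟩
  · intro K hK
    have himg : (K.image (Fin.val)).Nonempty := hK.image _
    have : K.biUnion (fun i => HSeq U c i.val) = (K.image Fin.val).biUnion (HSeq U c) := by
      rw [Finset.image_biUnion]
    rw [this]
    have := HSeq_union hidem hE hc (K.image Fin.val) himg
    exact seqF_anti hidem hE hc (Nat.zero_le _) this

end Extraction

/-- Infinite-Hindman style: every 2-coloring admits, for each `k`, a monochromatic
finite block system. -/
lemma mono_blockseq (U : Ultrafilter (Finset ℕ)) (hidem : U * U = U) (hE : ∀ n, En n ∈ U)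
    (χ : Finset ℕ → Bool) (k : ℕ) :
    ∃ H : Fin k → Finset ℕ, BlockSeq H ∧ ∃ b : Bool,
      ∀ K : Finset (Fin k), K.Nonempty → χ (K.biUnion H) = b := by
  by_cases h : {K : Finset ℕ | χ K = true} ∈ U
  · obtain ⟨H, hH, hmem⟩ := exists_blockseq_in hidem hE h k
    exact ⟨H, hH, true, fun K hK => hmem K hK⟩
  · have h' : {K : Finset ℕ | χ K = false} ∈ U := by
      have := (Ultrafilter.compl_mem_iff_notMem).mpr h
      refine Filter.mem_of_superset this ?_
      intro K hK
      simp only [Set.mem_compl_iff, Set.mem_setOf_eq] at hK ⊢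
      exact Bool.eq_false_iff.mpr (fun hb => hK (by simp [hb]))
    obtain ⟨H, hH, hmem⟩ := exists_blockseq_in hidem hE h' k
    exact ⟨H, hH, false, fun K hK => hmem K hK⟩

open scoped Classical in
/-- Finite unions theorem, uniform version via compactness. -/
lemma finite_unions_theorem (k : ℕ) :
    ∃ n : ℕ, ∀ χ : Finset ℕ → Bool,
      ∃ H : Fin k → Finset ℕ, BlockSeq H ∧ (∀ i, H i ⊆ Finset.range n) ∧
        ∃ b : Bool, ∀ K : Finset (Fin k), K.Nonempty → χ (K.biUnion H) = b := by
  obtain ⟨U, hidem, hE⟩ := exists_goodU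
  by_contra hcon
  push_neg at hcon
  choose χs hχs using hcon
  set V := Filter.hyperfilter ℕ with hV
  set χ : Finset ℕ → Bool := fun K => if {n | χs n K = true} ∈ V then true else false with hχ
  obtain ⟨H, hH, b, hmono⟩ := mono_blockseq U hidem hE χ k
  set N := (Finset.univ.sup (fun i : Fin k => (H i).sup id)) + 1 with hN
  have hHN : ∀ i, H i ⊆ Finset.range N := by
    intro i x hx
    rw [Finset.mem_range]
    have : x ≤ (H i).sup id := Finset.le_sup (f := id) hx
    have : (H i).sup id ≤ Finset.univ.sup (fun i : Fin k => (H i).sup id) :=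
      Finset.le_sup (f := fun i : Fin k => (H i).sup id) (Finset.mem_univ i)
    omega
  have hT : {n | ∀ K : Finset (Fin k), K.Nonempty → χs n (K.biUnion H) = b} ∈ V := by
    have : (⋂ K : Finset (Fin k), {n | K.Nonempty → χs n (K.biUnion H) = b}) ∈ V := by
      refine (Filter.iInter_mem (f := (V : Filter ℕ))).mpr fun K => ?_
      rcases K.eq_empty_or_nonempty with rfl | hK
      · refine Filter.mem_of_superset Filter.univ_mem ?_
        intro n _
        simp
      · have hχK := hmono K hK
        cases b with
        | true =>
          have : {n | χs n (K.biUnion H) = true} ∈ V := by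
            by_contra hnot
            rw [hχ] at hχK
            simp only [if_neg hnot] at hχK
            exact Bool.noConfusion hχK
          exact Filter.mem_of_superset this (fun n hn _ => hn)
        | false =>
          have hnot : {n | χs n (K.biUnion H) = true} ∉ V := by
            intro hmem2
            rw [hχ] at hχK
            simp only [if_pos hmem2] at hχK
            exact Bool.noConfusion hχK
          have : {n | χs n (K.biUnion H) = true}ᶜ ∈ V :=
            (Ultrafilter.compl_mem_iff_notMem).mpr hnot
          refine Filter.mem_of_superset this ?_
          intro n hn _
          simp only [Set.mem_compl_iff, Set.mem_setOf_eq] at hn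
          exact Bool.eq_false_iff.mpr (fun hb => hn (by simp [hb]))
    refine Filter.mem_of_superset this ?_
    intro n hn
    rw [Set.mem_iInter] at hn
    exact fun K hK => hn K hK
  have hT2 : {n | N ≤ n} ∈ V := by
    apply Filter.mem_hyperfilter_of_finite_compl
    have : {n | N ≤ n}ᶜ ⊆ Set.Iio N := fun n hn => by
      simp only [Set.mem_compl_iff, Set.mem_setOf_eq, not_le] at hn
      exact hn
    exact (Set.finite_Iio N).subset this
  obtain ⟨n, hn1, hn2⟩ := Ultrafilter.nonempty_of_mem (Filter.inter_mem hT hT2)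
  obtain ⟨K, hK, hne⟩ := hχs n H hH (fun i => (hHN i).trans (Finset.range_subset_range.mpr hn2)) b
  exact hne (hn1 K hK)

theorem IPrStar_inter (r s : ℕ) : ∃ l : ℕ, ∀ A B : Set (Finset ℕ),
    IsIPrStar r A → IsIPrStar s B → IsIPrStar l (A ∩ B) := by
  classical
  obtain ⟨n, hn⟩ := finite_unions_theorem (max r s)
  refine ⟨n, fun A B hA hB C hC => ?_⟩
  obtain ⟨H, hH, rfl⟩ := hC
  set k := max r s with hk
  set g : Finset ℕ → Finset ℕ :=
    fun K => K.biUnion (fun x => if h : x < n then H ⟨x, h⟩ else ∅) with hg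
  set χ : Finset ℕ → Bool := fun K => if g K ∈ A then true else false with hχ
  obtain ⟨H', hH', hHn', b, hmono⟩ := hn χ
  set G : Fin k → Finset ℕ := fun i => g (H' i) with hG
  have hmemg : ∀ (K : Finset ℕ) (y : ℕ),
      y ∈ g K ↔ ∃ u, ∃ _ : u ∈ K, ∃ h : u < n, y ∈ H ⟨u, h⟩ := by
    intro K y
    simp only [hg, Finset.mem_biUnion]
    constructor
    · rintro ⟨u, hu, hy⟩
      by_cases h : u < n
      · rw [dif_pos h] at hy; exact ⟨u, hu, h, hy⟩
      · rw [dif_neg h] at hy; exact absurd hy (Finset.notMem_empty y)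
    · rintro ⟨u, hu, h, hy⟩
      exact ⟨u, hu, by rw [dif_pos h]; exact hy⟩
  have hGmem : ∀ (K : Finset (Fin k)), K.biUnion G = g (K.biUnion H') := by
    intro K
    ext y
    rw [hmemg, Finset.mem_biUnion]
    constructor
    · rintro ⟨i, hi, hy⟩
      obtain ⟨u, hu, h, hyu⟩ := (hmemg (H' i) y).mp hy
      exact ⟨u, Finset.mem_biUnion.mpr ⟨i, hi, hu⟩, h, hyu⟩
    · rintro ⟨u, hu, h, hyu⟩
      obtain ⟨i, hi, hui⟩ := Finset.mem_biUnion.mp hu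
      exact ⟨i, hi, (hmemg (H' i) y).mpr ⟨u, hui, h, hyu⟩⟩
  have hGblock : BlockSeq G := by
    constructor
    · intro i
      obtain ⟨x, hx⟩ := hH'.1 i
      have hxn : x < n := Finset.mem_range.mp (hHn' i hx)
      obtain ⟨y, hy⟩ := hH.1 ⟨x, hxn⟩
      exact ⟨y, (hmemg (H' i) y).mpr ⟨x, hx, hxn, hy⟩⟩
    · intro i j hij x hx y hy
      obtain ⟨u, hu, hun, hxu⟩ := (hmemg (H' i) x).mp hx
      obtain ⟨v, hv, hvn, hyv⟩ := (hmemg (H' j) y).mp hy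
      have huv : u < v := hH'.2 i j hij u hu v hv
      exact hH.2 ⟨u, hun⟩ ⟨v, hvn⟩ (by simpa [Fin.lt_def] using huv) x hxu y hyv
  have hGFU : ∀ (K : Finset (Fin k)), K.Nonempty → K.biUnion G ∈ FU H := by
    intro K hK
    rw [hGmem]
    set P := K.biUnion H' with hP
    have hPsub : ∀ m ∈ P, m < n := by
      intro m hm
      obtain ⟨i, _, hmi⟩ := Finset.mem_biUnion.mp hm
      exact Finset.mem_range.mp (hHn' i hmi)
    have hPne : P.Nonempty := by
      obtain ⟨i, hi⟩ := hK
      obtain ⟨x, hx⟩ := hH'.1 i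
      exact ⟨x, Finset.mem_biUnion.mpr ⟨i, hi, hx⟩⟩
    refine ⟨P.attachFin hPsub, ?_, ?_⟩
    · rw [← Finset.card_pos, Finset.card_attachFin, Finset.card_pos]
      exact hPne
    · ext y
      rw [hmemg, Finset.mem_biUnion]
      constructor
      · rintro ⟨u, hu, h, hy⟩
        exact ⟨⟨u, h⟩, (Finset.mem_attachFin hPsub).mpr hu, hy⟩
      · rintro ⟨i, hi, hy⟩
        exact ⟨i.val, (Finset.mem_attachFin hPsub).mp hi, i.isLt, by rwa [Fin.eta]⟩
  have hcastblock : ∀ (m : ℕ) (h : m ≤ k),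
      BlockSeq (fun i : Fin m => G (Fin.castLE h i)) := by
    intro m h
    refine ⟨fun i => hGblock.1 _, fun i j hij x hx y hy => ?_⟩
    refine hGblock.2 _ _ ?_ x hx y hy
    rw [Fin.lt_def, Fin.coe_castLE, Fin.coe_castLE]
    exact hij
  have himgbi : ∀ (m : ℕ) (h : m ≤ k) (K : Finset (Fin m)),
      K.biUnion (fun i => G (Fin.castLE h i)) = (K.image (Fin.castLE h)).biUnion G :=
    fun m h K => (Finset.image_biUnion).symm
  have hb : b = true := by
    by_contra hbf
    have hbf : b = false := by
      cases b
      · rfl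
      · exact absurd rfl hbf
    obtain ⟨x, hxA, hxFU⟩ := hA _ ⟨fun i : Fin r => G (Fin.castLE (le_max_left r s) i),
      hcastblock r (le_max_left r s), rfl⟩
    obtain ⟨K, hK, rfl⟩ := hxFU
    have himg : (K.image (Fin.castLE (le_max_left r s))).Nonempty := hK.image _
    have hmK := hmono (K.image (Fin.castLE (le_max_left r s))) himg
    rw [hbf, hχ] at hmK
    have hnotA : g ((K.image (Fin.castLE (le_max_left r s))).biUnion H') ∉ A := by
      intro hmem
      simp only [if_pos hmem] at hmK
      exact Bool.noConfusion hmK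
    rw [himgbi r (le_max_left r s) K, hGmem] at hxA
    exact hnotA hxA
  have hFUA : ∀ K : Finset (Fin k), K.Nonempty → K.biUnion G ∈ A := by
    intro K hK
    have hmK := hmono K hK
    rw [hb, hχ] at hmK
    rw [hGmem]
    by_contra hmem
    simp only [if_neg hmem] at hmK
    exact Bool.noConfusion hmK
  obtain ⟨x, hxB, hxFU⟩ := hB _ ⟨fun i : Fin s => G (Fin.castLE (le_max_right r s) i),
    hcastblock s (le_max_right r s), rfl⟩
  obtain ⟨K, hK, rfl⟩ := hxFU
  have himg : (K.image (Fin.castLE (le_max_right r s))).Nonempty := hK.image _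
  rw [himgbi s (le_max_right r s) K] at hxB
  exact ⟨_, ⟨⟨hFUA _ himg, hxB⟩, hGFU _ himg⟩⟩
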